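/- Let $e_1, \dots, e_m$ be nonnegative random variables with $\mathbb{E}[e_j] \le 1$ for every $j$ in a subset $\mathcal{H}_0 \subseteq \{1, \dots, m\}$, and let $\alpha \in (0,1)$. Define the e-BH rejection set $\mathcal{R} = \{j : e_j \ge m/(\alpha k^*)\}$ where $k^* = \max\{k \in \{0, 1, \dots, m\} : \#\{j : e_j \ge m/(\alpha k)\} \ge k\}$ (with the convention that the condition holds vacuously for $k=0$). Then the false discovery rate satisfies $\mathrm{FDR} := \mathbb{E}\left[\frac{\#(\mathcal{H}_0 \cap \mathcal{R})}{\max(|\mathcal{R}|, 1)}\right] \le \frac{|\mathcal{H}_0|}{m}\,\alpha$. -/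

import Mathlib

open MeasureTheory Finset
open scoped Classical

/-- The largest `k ∈ {0, …, m}` such that at least `k` of the e-values exceed
`m / (α k)` (the condition holds vacuously for `k = 0`). -/
noncomputable def ebhK (m : ℕ) (α : ℝ) (e : Fin m → ℝ) : ℕ :=
  sSup {k | k ≤ m ∧ k ≤ (Finset.univ.filter (fun j => (m : ℝ) / (α * k) ≤ e j)).card}

/-- The e-BH rejection set at level `α`: `{j : e_j ≥ m / (α k*)}`, empty if `k* = 0`. -/
noncomputable def ebhR (m : ℕ) (α : ℝ) (e : Fin m → ℝ) : Finset (Fin m) :=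
  if ebhK m α e = 0 then ∅
  else Finset.univ.filter (fun j => (m : ℝ) / (α * (ebhK m α e : ℝ)) ≤ e j)

lemma ebhK_mem (m : ℕ) (α : ℝ) (e : Fin m → ℝ) :
    ebhK m α e ≤ m ∧ ebhK m α e ≤
      (Finset.univ.filter (fun j => (m : ℝ) / (α * (ebhK m α e : ℝ)) ≤ e j)).card := by
  have h : ebhK m α e ∈
      {k | k ≤ m ∧ k ≤ (Finset.univ.filter (fun j => (m : ℝ) / (α * k) ≤ e j)).card} := by
    apply Nat.sSup_mem
    · exact ⟨0, Nat.zero_le m, Nat.zero_le _⟩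
    · exact ⟨m, fun k hk => hk.1⟩
  exact h

lemma fdp_le (m : ℕ) (α : ℝ) (hα : 0 < α) (e : Fin m → ℝ) (he0 : ∀ j, 0 ≤ e j)
    (H0 : Finset (Fin m)) :
    ((H0 ∩ ebhR m α e).card : ℝ) / max ((ebhR m α e).card : ℝ) 1
      ≤ ∑ j ∈ H0, α / m * e j := by
  have hsum0 : (0:ℝ) ≤ ∑ j ∈ H0, α / m * e j := by
    apply Finset.sum_nonneg
    intro j _
    have : (0:ℝ) ≤ α / m := div_nonneg hα.le (Nat.cast_nonneg m)
    exact mul_nonneg this (he0 j)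
  by_cases hk0 : ebhK m α e = 0
  · simp [ebhR, hk0, hsum0]
  · set k := ebhK m α e with hkdef
    have hmem := ebhK_mem m α e
    set R := Finset.univ.filter (fun j => (m : ℝ) / (α * (k : ℝ)) ≤ e j) with hRdef
    have hR : ebhR m α e = R := by unfold ebhR; exact if_neg hk0
    have hkpos : 0 < k := Nat.pos_of_ne_zero hk0
    have hmpos : 0 < m := lt_of_lt_of_le hkpos hmem.1
    have hkR : k ≤ R.card := hmem.2
    have hk' : (0:ℝ) < k := Nat.cast_pos.mpr hkpos
    have hm' : (0:ℝ) < m := Nat.cast_pos.mpr hmpos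
    have hRcard : (1:ℝ) ≤ (R.card : ℝ) := by
      exact_mod_cast Nat.one_le_iff_ne_zero.mpr (by omega)
    rw [hR, max_eq_left hRcard]
    have hRk : (k:ℝ) ≤ (R.card : ℝ) := Nat.cast_le.mpr hkR
    have step1 : ((H0 ∩ R).card : ℝ) / (R.card : ℝ) ≤ ((H0 ∩ R).card : ℝ) / k :=
      div_le_div_of_nonneg_left (Nat.cast_nonneg _) hk' hRk
    have step2 : ((H0 ∩ R).card : ℝ) / k ≤ ∑ j ∈ H0 ∩ R, α / m * e j := by
      rw [Finset.card_eq_sum_ones, Nat.cast_sum]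
      rw [Finset.sum_div]
      apply Finset.sum_le_sum
      intro j hj
      have hjR : j ∈ R := (Finset.mem_inter.mp hj).2
      have hje : (m : ℝ) / (α * k) ≤ e j := (Finset.mem_filter.mp hjR).2
      have hαk : (0:ℝ) < α * k := mul_pos hα hk'
      have hm : (m:ℝ) ≤ e j * (α * k) := (div_le_iff₀ hαk).mp hje
      rw [Nat.cast_one]
      rw [div_le_iff₀ hk', div_mul_eq_mul_div, div_mul_eq_mul_div, le_div_iff₀ hm']
      nlinarith
    have step3 : ∑ j ∈ H0 ∩ R, α / m * e j ≤ ∑ j ∈ H0, α / m * e j := by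
      apply Finset.sum_le_sum_of_subset_of_nonneg (Finset.inter_subset_left)
      intro j _ _
      exact mul_nonneg (div_nonneg hα.le hm'.le) (he0 j)
    linarith

/-- the e-BH procedure applied to e-values controls the FDR at level
`(|H0|/m) α`. -/
theorem stmt4 {Ω : Type*} [MeasurableSpace Ω] (μ : Measure Ω) [IsProbabilityMeasure μ]
    (m : ℕ) (e : Fin m → Ω → ℝ) (he0 : ∀ j ω, 0 ≤ e j ω)
    (hmeas : ∀ j, Measurable (e j)) (hInt : ∀ j, Integrable (e j) μ)
    (H0 : Finset (Fin m)) (hE : ∀ j ∈ H0, ∫ ω, e j ω ∂μ ≤ 1)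
    (α : ℝ) (hα : 0 < α) (hα1 : α < 1) :
    ∫ ω, ((H0 ∩ ebhR m α (fun j => e j ω)).card : ℝ)
        / max ((ebhR m α (fun j => e j ω)).card : ℝ) 1 ∂μ
      ≤ (H0.card : ℝ) / m * α := by
  have hg : Integrable (fun ω => ∑ j ∈ H0, α / m * e j ω) μ :=
    integrable_finset_sum _ (fun j _ => (hInt j).const_mul _)
  have hkey : ∀ ω, ((H0 ∩ ebhR m α (fun j => e j ω)).card : ℝ)
      / max ((ebhR m α (fun j => e j ω)).card : ℝ) 1 ≤ ∑ j ∈ H0, α / m * e j ω :=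
    fun ω => fdp_le m α hα _ (fun j => he0 j ω) H0
  have hnn : 0 ≤ᵐ[μ] fun ω => ((H0 ∩ ebhR m α (fun j => e j ω)).card : ℝ)
      / max ((ebhR m α (fun j => e j ω)).card : ℝ) 1 := by
    apply ae_of_all
    intro ω
    exact div_nonneg (Nat.cast_nonneg _) (le_trans zero_le_one (le_max_right _ 1))
  calc ∫ ω, ((H0 ∩ ebhR m α (fun j => e j ω)).card : ℝ)
        / max ((ebhR m α (fun j => e j ω)).card : ℝ) 1 ∂μ
      ≤ ∫ ω, ∑ j ∈ H0, α / m * e j ω ∂μ :=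
        integral_mono_of_nonneg hnn hg (ae_of_all _ hkey)
    _ = ∑ j ∈ H0, α / m * ∫ ω, e j ω ∂μ := by
        rw [integral_finset_sum _ (fun j _ => (hInt j).const_mul _)]
        exact Finset.sum_congr rfl fun j _ => integral_const_mul _ _
    _ ≤ ∑ j ∈ H0, α / m * 1 := by
        apply Finset.sum_le_sum
        intro j hj
        exact mul_le_mul_of_nonneg_left (hE j hj) (div_nonneg hα.le (Nat.cast_nonneg m))
    _ = (H0.card : ℝ) / m * α := by
        rw [Finset.sum_const, nsmul_eq_mul]
        ring
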